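/- Let (X, φ) be a metric space, γ > 0, L > 0, let F be any class of functions X → ℝ, and let F(L) ⊆ F be its members with Lipschitz constant at most L. Then: (i) for every finite labelled sample S ∈ (X × {−1,1})^n, err(F^{0/1}(L/2γ), S) ≤ err^γ(F(L), S); and (ii) for every probability distribution D on X × {−1,1} and every n ∈ ℕ, err*(F^{0/1}(L/2γ), D, n) ≤ err^γ(F(L), D), and consequently err*(F^{0/1}(L/2γ), D) ≤ err^γ(F(L), D). -/

import Mathlib

open MeasureTheory

namespace Stmt11

variable {X : Type*}

/-- Encoding of a `{−1,1}` label by a Bool: `true ↦ 1`, `false ↦ −1`. -/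
def ssign (b : Bool) : ℝ := if b then 1 else -1

/-- `f` has Lipschitz constant at most `L`. -/
def LipBound [MetricSpace X] (L : ℝ) (f : X → ℝ) : Prop :=
  ∀ x y : X, |f x - f y| ≤ L * dist x y

/-- The partial class `F^{0/1}(L/2γ)`: signs of members of `F`, with opposite labels
allowed only at distance at least `2γ/L`. -/
def signClass [MetricSpace X] (F : Set (X → ℝ)) (γ L : ℝ) : Set (X → Option Bool) :=
  {h | (∃ f ∈ F, ∀ x : X, ∀ b : Bool, h x = some b → b = decide (0 ≤ f x)) ∧
    ∀ x₁ x₂ : X, ∀ b₁ b₂ : Bool,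
      h x₁ = some b₁ → h x₂ = some b₂ → dist x₁ x₂ < 2 * γ / L → b₁ = b₂}

/-- Empirical error of a partial concept on a labelled sample (⋆ counts as an error). -/
noncomputable def errPList (h : X → Option Bool) (S : List (X × Bool)) : ℝ :=
  (S.map fun p => if h p.1 = some p.2 then (0 : ℝ) else 1).sum / S.length

/-- Empirical error of a partial concept class (infimum over members). -/
noncomputable def errClassList (H : Set (X → Option Bool)) (S : List (X × Bool)) : ℝ :=
  ⨅ h : H, errPList (h : X → Option Bool) S

/-- Empirical `γ`-margin error of a real-valued function. -/
noncomputable def errMarginList (γ : ℝ) (f : X → ℝ) (S : List (X × Bool)) : ℝ :=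
  (S.map fun p => if ssign p.2 * f p.1 < γ then (1 : ℝ) else 0).sum / S.length

/-- `γ`-margin error of a real-valued function with respect to a distribution. -/
noncomputable def errMarginD [MeasurableSpace X] (γ : ℝ) (f : X → ℝ)
    (D : Measure (X × Bool)) : ℝ :=
  (D {p | ssign p.2 * f p.1 < γ}).toReal

/-- `err*(H', D, n) = E_{S∼D^n}[min_{h∈H'} err(h,S)]`. -/
noncomputable def errStar [MeasurableSpace X] (H : Set (X → Option Bool))
    (D : Measure (X × Bool)) (n : ℕ) : ℝ :=
  ∫ S, errClassList H (List.ofFn S) ∂(Measure.pi fun _ : Fin n => D)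

/-! ### Auxiliary lemmas -/

/-- The canonical partial concept attached to `f`: labels only where `|f| ≥ γ`. -/
noncomputable def hstar (γ : ℝ) (f : X → ℝ) : X → Option Bool :=
  fun x => if γ ≤ |f x| then some (decide (0 ≤ f x)) else none

lemma hstar_some {γ : ℝ} {f : X → ℝ} {x : X} {b : Bool}
    (h : hstar γ f x = some b) : (b = true ∧ γ ≤ f x) ∨ (b = false ∧ f x ≤ -γ) := by
  unfold hstar at h
  by_cases habs : γ ≤ |f x|
  · simp only [habs, if_true, Option.some.injEq] at h
    by_cases hpos : 0 ≤ f x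
    · left
      refine ⟨by simp [← h, hpos], ?_⟩
      rwa [abs_of_nonneg hpos] at habs
    · right
      refine ⟨by simp [← h, hpos], ?_⟩
      rw [abs_of_neg (lt_of_not_ge hpos)] at habs; linarith
  · simp [habs] at h

lemma hstar_mem [MetricSpace X] {γ L : ℝ} (hγ : 0 < γ) (hL : 0 < L)
    {F : Set (X → ℝ)} {f : X → ℝ} (hf : f ∈ F) (hlip : LipBound L f) :
    hstar γ f ∈ signClass F γ L := by
  constructor
  · refine ⟨f, hf, fun x b hb => ?_⟩
    unfold hstar at hb
    by_cases habs : γ ≤ |f x|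
    · simp only [habs, if_true, Option.some.injEq] at hb; exact hb.symm
    · simp [habs] at hb
  · intro x₁ x₂ b₁ b₂ h₁ h₂ hd
    by_contra hne
    have key : 2 * γ ≤ |f x₁ - f x₂| := by
      rcases hstar_some h₁ with ⟨hb1, hv1⟩ | ⟨hb1, hv1⟩ <;>
        rcases hstar_some h₂ with ⟨hb2, hv2⟩ | ⟨hb2, hv2⟩
      · exact absurd (hb1.trans hb2.symm) hne
      · rw [abs_of_nonneg (by linarith)]; linarith
      · rw [abs_of_nonpos (by linarith)]; linarith
      · exact absurd (hb1.trans hb2.symm) hne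
    have hlip' := hlip x₁ x₂
    have hdd : 2 * γ ≤ L * dist x₁ x₂ := le_trans key hlip'
    have hd' : L * dist x₁ x₂ < 2 * γ := by
      have := (lt_div_iff₀' hL).mp hd
      linarith
    linarith

lemma errPList_nonneg (h : X → Option Bool) (S : List (X × Bool)) : 0 ≤ errPList h S := by
  unfold errPList
  apply div_nonneg _ (by positivity)
  apply List.sum_nonneg
  intro x hx
  simp only [List.mem_map] at hx
  obtain ⟨p, -, rfl⟩ := hx
  split <;> norm_num

lemma errClassList_le {H : Set (X → Option Bool)} {h : X → Option Bool} (hm : h ∈ H)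
    (S : List (X × Bool)) : errClassList H S ≤ errPList h S := by
  unfold errClassList
  exact ciInf_le ⟨0, by rintro y ⟨g, rfl⟩; exact errPList_nonneg _ _⟩ (⟨h, hm⟩ : H)

lemma errClassList_nonneg {H : Set (X → Option Bool)} (hne : H.Nonempty)
    (S : List (X × Bool)) : 0 ≤ errClassList H S := by
  unfold errClassList
  haveI : Nonempty H := hne.to_subtype
  exact le_ciInf fun h => errPList_nonneg _ _

lemma point_le {γ : ℝ} (hγ : 0 < γ) (f : X → ℝ) (p : X × Bool) :
    (if hstar γ f p.1 = some p.2 then (0 : ℝ) else 1) ≤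
      (if ssign p.2 * f p.1 < γ then (1 : ℝ) else 0) := by
  by_cases hm : ssign p.2 * f p.1 < γ
  · simp only [hm, if_true]; split <;> norm_num
  · simp only [hm, if_false]
    have hge : γ ≤ ssign p.2 * f p.1 := le_of_not_gt hm
    have : hstar γ f p.1 = some p.2 := by
      unfold hstar
      cases hb : p.2 with
      | true =>
        rw [hb] at hge; simp only [ssign, if_true, one_mul] at hge
        have habs : γ ≤ |f p.1| := le_trans hge (le_abs_self _)
        simp [habs, show (0:ℝ) ≤ f p.1 by linarith]
      | false =>
        rw [hb] at hge
        simp only [ssign, Bool.false_eq_true, if_false, neg_one_mul] at hge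
        have habs : γ ≤ |f p.1| := le_trans (by linarith : γ ≤ -f p.1) (neg_le_abs _)
        have h0 : ¬ (0:ℝ) ≤ f p.1 := by intro h; linarith
        simp [habs, h0]
    simp [this]

lemma errPList_hstar_le {γ : ℝ} (hγ : 0 < γ) (f : X → ℝ) (S : List (X × Bool)) :
    errPList (hstar γ f) S ≤ errMarginList γ f S := by
  unfold errPList errMarginList
  rw [div_eq_mul_inv, div_eq_mul_inv]
  refine mul_le_mul_of_nonneg_right ?_ (by positivity)
  exact List.sum_le_sum fun p _ => point_le hγ f p

lemma errClassList_le_margin [MetricSpace X] {γ L : ℝ} (hγ : 0 < γ) (hL : 0 < L)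
    {F : Set (X → ℝ)} {f : X → ℝ} (hf : f ∈ F) (hlip : LipBound L f)
    (S : List (X × Bool)) :
    errClassList (signClass F γ L) S ≤ errMarginList γ f S :=
  le_trans (errClassList_le (hstar_mem hγ hL hf hlip) S) (errPList_hstar_le hγ f S)

/-- (i) `err(F^{0/1}(L/2γ), S) ≤ err^γ(F(L), S)` on every finite sample;
(ii) `err*(F^{0/1}(L/2γ), D, n) ≤ err^γ(F(L), D)` for every `n`, and consequently the
limit `err*(F^{0/1}(L/2γ), D)`, whenever it exists, is at most `err^γ(F(L), D)`.
(The inequalities against the infimum `err^γ(F(L), ·)` are expressed by quantifying over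
all `f ∈ F(L)`.) -/
theorem statement11 (X : Type) [MetricSpace X] [MeasurableSpace X]
    (γ L : ℝ) (hγ : 0 < γ) (hL : 0 < L) (F : Set (X → ℝ)) :
    (∀ S : List (X × Bool), ∀ f ∈ F, LipBound L f →
      errClassList (signClass F γ L) S ≤ errMarginList γ f S) ∧
    (∀ (D : Measure (X × Bool)), IsProbabilityMeasure D →
      (∀ n : ℕ, ∀ f ∈ F, LipBound L f →
        errStar (signClass F γ L) D n ≤ errMarginD γ f D) ∧
      (∀ l : ℝ,
        Filter.Tendsto (fun n => errStar (signClass F γ L) D n) Filter.atTop (nhds l) →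
        ∀ f ∈ F, LipBound L f → l ≤ errMarginD γ f D)) := by
  refine ⟨fun S f hf hlip => errClassList_le_margin hγ hL hf hlip S, fun D hD => ?_⟩
  have main : ∀ n : ℕ, ∀ f ∈ F, LipBound L f →
      errStar (signClass F γ L) D n ≤ errMarginD γ f D := by
    intro n f hf hlip
    set A : Set (X × Bool) := {p | ssign p.2 * f p.1 < γ} with hAdef
    set B := toMeasurable D A with hBdef
    have hB : MeasurableSet B := measurableSet_toMeasurable D A
    have hAB : A ⊆ B := subset_toMeasurable D A
    set π := Measure.pi fun _ : Fin n => D with hπdef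
    haveI : IsProbabilityMeasure π := Measure.pi.instIsProbabilityMeasure _
    set g : (Fin n → X × Bool) → ℝ :=
      fun S => (∑ i, B.indicator (fun _ => (1:ℝ)) (S i)) / n with hgdef
    have hpt : ∀ S : Fin n → X × Bool,
        errClassList (signClass F γ L) (List.ofFn S) ≤ g S := by
      intro S
      refine le_trans (errClassList_le_margin hγ hL hf hlip _) ?_
      unfold errMarginList
      rw [hgdef]
      simp only [List.map_ofFn, List.sum_ofFn, List.length_ofFn, Function.comp]
      rw [div_eq_mul_inv, div_eq_mul_inv]
      refine mul_le_mul_of_nonneg_right ?_ (by positivity)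
      refine Finset.sum_le_sum fun i _ => ?_
      by_cases hmem : ssign (S i).2 * f (S i).1 < γ
      · have : S i ∈ B := hAB hmem
        simp [hmem, Set.indicator_of_mem this]
      · simp only [hmem, if_false]
        exact Set.indicator_nonneg (fun _ _ => zero_le_one) _
    have hpre : ∀ i : Fin n, MeasurableSet (Function.eval i ⁻¹' B : Set (Fin n → X × Bool)) :=
      fun i => hB.preimage (measurable_pi_apply i)
    have hfun : ∀ i : Fin n, (fun S : Fin n → X × Bool => B.indicator (fun _ => (1:ℝ)) (S i)) =
        (Function.eval i ⁻¹' B).indicator (fun _ => (1:ℝ)) := by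
      intro i
      funext S
      by_cases h : S i ∈ B
      · rw [Set.indicator_of_mem h,
          Set.indicator_of_mem (show S ∈ Function.eval i ⁻¹' B from h)]
      · rw [Set.indicator_of_notMem h,
          Set.indicator_of_notMem (show S ∉ Function.eval i ⁻¹' B from h)]
    have hint_i : ∀ i : Fin n,
        Integrable (fun S : Fin n → X × Bool => B.indicator (fun _ => (1:ℝ)) (S i)) π := by
      intro i
      rw [hfun i]
      exact (integrable_indicator_iff (hpre i)).mpr
        ((integrableOn_const_iff (by simp)).mpr (Or.inr (measure_lt_top _ _)))
    have hgint : Integrable g π := by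
      rw [hgdef]
      simp only [div_eq_mul_inv]
      exact (integrable_finset_sum _ fun i _ => hint_i i).mul_const _
    have hπpre : ∀ i : Fin n, π (Function.eval i ⁻¹' B) = D B := by
      intro i
      have he : (Function.eval i ⁻¹' B : Set (Fin n → X × Bool)) =
          Set.pi Set.univ
            (Function.update (fun _ : Fin n => (Set.univ : Set (X × Bool))) i B) :=
        Set.eval_preimage
      rw [he, hπdef, Measure.pi_pi]
      rw [Finset.prod_eq_single i (fun j _ hj => by simp [Function.update_of_ne hj])
        (by simp)]
      simp
    have hval : ∫ S, g S ∂π ≤ (D A).toReal := by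
      have hcalc : ∫ S, g S ∂π = (∑ _i : Fin n, (D B).toReal) / n := by
        rw [hgdef]
        rw [integral_div]
        rw [integral_finset_sum _ fun i _ => hint_i i]
        congr 1
        refine Finset.sum_congr rfl fun i _ => ?_
        rw [hfun i, integral_indicator (hpre i), setIntegral_const, measureReal_def, hπpre i]
        simp
      rw [hcalc, Finset.sum_const, Finset.card_univ, Fintype.card_fin]
      have hBA : D B = D A := measure_toMeasurable A
      rcases Nat.eq_zero_or_pos n with hn | hn
      · subst hn; simp [ENNReal.toReal_nonneg]
      · have hn' : (0:ℝ) < n := by exact_mod_cast hn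
        rw [nsmul_eq_mul, mul_div_assoc, mul_comm, div_mul_cancel₀ _ (ne_of_gt hn'), hBA]
    have hne : (signClass F γ L).Nonempty := ⟨hstar γ f, hstar_mem hγ hL hf hlip⟩
    calc errStar (signClass F γ L) D n
        = ∫ S, errClassList (signClass F γ L) (List.ofFn S) ∂π := rfl
      _ ≤ ∫ S, g S ∂π := by
          refine integral_mono_of_nonneg ?_ hgint ?_
          · exact Filter.Eventually.of_forall fun S => errClassList_nonneg hne _
          · exact Filter.Eventually.of_forall hpt
      _ ≤ (D A).toReal := hval
      _ = errMarginD γ f D := rfl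
  exact ⟨main, fun l hl f hf hlip =>
    le_of_tendsto hl (Filter.Eventually.of_forall fun n => main n f hf hlip)⟩

end Stmt11
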